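/- arXiv:2206.12936 — 2 statements merged into one kernel-verified Lean document; each statement's English description precedes it below -/
import Mathlib

section
/- Let X be a complete Hausdorff locally convex topological vector space. If a function f : Ω → X is p-Bochner integrable for every continuous seminorm p on X, then f is integrable by seminorm; that is, there exist, for each continuous seminorm p, an approximating sequence (f_n^p) of measurable simple functions witnessing p-Bochner integrability such that for each E ∈ Σ there is a single vector x_E ∈ X (independent of p) with p(x_E − ∫_E f_n^p dμ) → 0 for every continuous seminorm p. -/
open MeasureTheory Filter Topology

variable {Ω : Type*} [MeasurableSpace Ω]

/-- A measurable simple function: finitely many values and measurable fibers. -/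
def IsMeasSimple {X : Type*} (s : Ω → X) : Prop :=
  (Set.range s).Finite ∧ ∀ x : X, MeasurableSet (s ⁻¹' {x})

/-- Integral of a (measurable simple) function `s` over `E`:
`∑_{x ∈ range s} μ(E ∩ s⁻¹{x}) • x`. -/
noncomputable def simpleIntegral {X : Type*} [AddCommGroup X] [Module ℝ X]
    (μ : Measure Ω) (s : Ω → X) (E : Set Ω) : X :=
  ∑ᶠ x : X, (μ (E ∩ s ⁻¹' {x})).toReal • x

/-- `f` is `p`-strongly measurable. -/
def IsPStronglyMeasurable {X : Type*} [AddCommGroup X] [Module ℝ X]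
    (μ : Measure Ω) (p : Seminorm ℝ X) (f : Ω → X) : Prop :=
  ∃ (fn : ℕ → Ω → X) (Z : Set Ω), (∀ n, IsMeasSimple (fn n)) ∧
    MeasurableSet Z ∧ μ Z = 0 ∧
    ∀ t ∉ Z, Tendsto (fun n => p (fn n t - f t)) atTop (𝓝 0)

/-- `(fn, Z)` witnesses that `f` is `p`-Bochner integrable: conditions (i), (ii)
and (iii) of the definition of `p`-Bochner integrability. -/
def IsPBochnerWitness {X : Type*} [AddCommGroup X] [Module ℝ X]
    (μ : Measure Ω) (p : Seminorm ℝ X) (f : Ω → X) (fn : ℕ → Ω → X) (Z : Set Ω) : Prop :=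
  (∀ n, IsMeasSimple (fn n)) ∧ MeasurableSet Z ∧ μ Z = 0 ∧
  (∀ t ∉ Z, Tendsto (fun n => p (fn n t - f t)) atTop (𝓝 0)) ∧
  (∀ n, Integrable (fun t => p (fn n t - f t)) μ) ∧
  Tendsto (fun n => ∫ t, p (fn n t - f t) ∂μ) atTop (𝓝 0) ∧
  ∀ E : Set Ω, MeasurableSet E → ∃ x : X,
    Tendsto (fun n => p (x - simpleIntegral μ (fn n) E)) atTop (𝓝 0)

/-- `f` is `p`-Bochner integrable. -/
def IsPBochner {X : Type*} [AddCommGroup X] [Module ℝ X]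
    (μ : Measure Ω) (p : Seminorm ℝ X) (f : Ω → X) : Prop :=
  ∃ (fn : ℕ → Ω → X) (Z : Set Ω), IsPBochnerWitness μ p f fn Z

/-- `x` is a `p`-integral of `f` over `E`. -/
def IsPIntegral {X : Type*} [AddCommGroup X] [Module ℝ X]
    (μ : Measure Ω) (p : Seminorm ℝ X) (f : Ω → X) (E : Set Ω) (x : X) : Prop :=
  ∃ (fn : ℕ → Ω → X) (Z : Set Ω), IsPBochnerWitness μ p f fn Z ∧
    Tendsto (fun n => p (x - simpleIntegral μ (fn n) E)) atTop (𝓝 0)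

/-- `f` is integrable by seminorm, with `I E` as its integral over each measurable `E`
(the vector `I E` is independent of the seminorm). -/
def IntegrableBySeminormWith {X : Type*} [AddCommGroup X] [Module ℝ X] [TopologicalSpace X]
    (μ : Measure Ω) (f : Ω → X) (I : Set Ω → X) : Prop :=
  ∃ F : Seminorm ℝ X → ℕ → Ω → X,
    (∀ p : Seminorm ℝ X, Continuous ⇑p → ∃ Z : Set Ω,
      (∀ n, IsMeasSimple (F p n)) ∧ MeasurableSet Z ∧ μ Z = 0 ∧
      (∀ t ∉ Z, Tendsto (fun n => p (F p n t - f t)) atTop (𝓝 0)) ∧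
      (∀ n, Integrable (fun t => p (F p n t - f t)) μ) ∧
      Tendsto (fun n => ∫ t, p (F p n t - f t) ∂μ) atTop (𝓝 0)) ∧
    ∀ E : Set Ω, MeasurableSet E → ∀ p : Seminorm ℝ X, Continuous ⇑p →
      Tendsto (fun n => p (I E - simpleIntegral μ (F p n) E)) atTop (𝓝 0)

/-- `f` is integrable by seminorm. -/
def IntegrableBySeminorm {X : Type*} [AddCommGroup X] [Module ℝ X] [TopologicalSpace X]
    (μ : Measure Ω) (f : Ω → X) : Prop :=
  ∃ I : Set Ω → X, IntegrableBySeminormWith μ f I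

/-- A countably additive vector measure on the measurable sets of `Ω`. -/
def IsVectorMeasureOn {X : Type*} [AddCommMonoid X] [TopologicalSpace X]
    (m : Set Ω → X) : Prop :=
  ∀ E : ℕ → Set Ω, (∀ n, MeasurableSet (E n)) → Pairwise (Function.onFun Disjoint E) →
    Tendsto (fun N => ∑ n ∈ Finset.range N, m (E n)) atTop (𝓝 (m (⋃ n, E n)))

/-- `m` is of bounded variation: for every continuous seminorm `p`, the sums
`∑_{A ∈ π} p (m A)` over finite measurable partitions `π` of `Ω` are bounded. -/
def HasBoundedVariation {X : Type*} [AddCommGroup X] [Module ℝ X] [TopologicalSpace X]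
    (m : Set Ω → X) : Prop :=
  ∀ p : Seminorm ℝ X, Continuous ⇑p → ∃ C : ℝ,
    ∀ π : Finset (Set Ω), (∀ A ∈ π, MeasurableSet A) →
      ((π : Set (Set Ω)).PairwiseDisjoint id) → ⋃₀ (π : Set (Set Ω)) = Set.univ →
      ∑ A ∈ π, p (m A) ≤ C

/-- `m` has locally relatively compact average range: for every measurable `E` of
positive measure, the set `{ m(A)/μ(A) : A ⊆ E measurable, μ A > 0 }` is relatively
compact in `X`. -/
def HasLocRelCompactAvgRange {X : Type*} [AddCommGroup X] [Module ℝ X] [TopologicalSpace X]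
    (μ : Measure Ω) (m : Set Ω → X) : Prop :=
  ∀ E : Set Ω, MeasurableSet E → 0 < μ E →
    IsCompact (closure {x : X | ∃ A : Set Ω, MeasurableSet A ∧ A ⊆ E ∧ 0 < μ A ∧
      x = (μ A).toReal⁻¹ • m A})

/-- `X` is a `B`-locally convex space with respect to `(Ω, Σ, μ)`: every family
`(f_p)`, indexed by the continuous seminorms on `X`, of pairwise almost the same
Bochner integrable functions admits a function `f : Ω → X` with
`∫ p (f - f_p) dμ = 0` for every continuous seminorm `p`. -/
def IsBLocallyConvex (X : Type*) [AddCommGroup X] [Module ℝ X] [TopologicalSpace X]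
    {Ω : Type*} [MeasurableSpace Ω] (μ : Measure Ω) : Prop :=
  ∀ F : Seminorm ℝ X → Ω → X,
    (∀ p : Seminorm ℝ X, Continuous ⇑p → IsPBochner μ p (F p)) →
    (∀ p q : Seminorm ℝ X, Continuous ⇑p → Continuous ⇑q → (∀ x, p x ≤ q x) →
      ∃ Z : Set Ω, MeasurableSet Z ∧ μ Z = 0 ∧ ∀ t ∉ Z, p (F p t - F q t) = 0) →
    ∃ f : Ω → X, ∀ p : Seminorm ℝ X, Continuous ⇑p →
      Integrable (fun t => p (f t - F p t)) μ ∧ (∫ t, p (f t - F p t) ∂μ) = 0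


section AuxSimple

variable {X Y : Type*} [AddCommGroup X] [Module ℝ X]
variable {μ : Measure Ω} [IsFiniteMeasure μ]

lemma seminorm_sum_le (q : Seminorm ℝ X) {ι : Type*} (s : Finset ι) (g : ι → X) :
    q (∑ i ∈ s, g i) ≤ ∑ i ∈ s, q (g i) := by
  classical
  induction s using Finset.cons_induction with
  | empty => simp
  | cons i s hi ih =>
      rw [Finset.sum_cons, Finset.sum_cons]
      exact (map_add_le_add q _ _).trans (by linarith)

lemma simpleIntegral_comp (u : Ω → Y) (hu : (Set.range u).Finite)
    (hfib : ∀ y : Y, MeasurableSet (u ⁻¹' {y})) (g : Y → X) {E : Set Ω}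
    (hE : MeasurableSet E) :
    simpleIntegral μ (fun ω => g (u ω)) E
      = ∑ y ∈ hu.toFinset, (μ (E ∩ u ⁻¹' {y})).toReal • g y := by
  classical
  set R := hu.toFinset with hR
  set T := R.image g with hT
  have hsupp : (Function.support fun x : X => (μ (E ∩ (fun ω => g (u ω)) ⁻¹' {x})).toReal • x)
      ⊆ (T : Set X) := by
    intro x hx
    by_contra hxT
    apply hx
    have hem : (fun ω => g (u ω)) ⁻¹' {x} = (∅ : Set Ω) := by
      ext ω
      simp only [Set.mem_preimage, Set.mem_singleton_iff, Set.mem_empty_iff_false, iff_false]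
      intro h
      exact hxT (by
        simp only [hT, Finset.coe_image, Set.mem_image]
        exact ⟨u ω, by simp [hR, Set.Finite.mem_toFinset], h⟩)
    simp [hem]
  rw [simpleIntegral, finsum_eq_sum_of_support_subset _ hsupp]
  have key : ∀ x ∈ T, (μ (E ∩ (fun ω => g (u ω)) ⁻¹' {x})).toReal • x
      = ∑ y ∈ R.filter (fun y => g y = x), (μ (E ∩ u ⁻¹' {y})).toReal • g y := by
    intro x hx
    have hdecomp : E ∩ (fun ω => g (u ω)) ⁻¹' {x}
        = ⋃ y ∈ R.filter (fun y => g y = x), E ∩ u ⁻¹' {y} := by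
      ext ω
      simp only [Set.mem_inter_iff, Set.mem_preimage, Set.mem_singleton_iff, Set.mem_iUnion,
        Finset.mem_filter, exists_prop]
      constructor
      · rintro ⟨hEω, hgu⟩
        exact ⟨u ω, ⟨by simp [hR, Set.Finite.mem_toFinset], hgu⟩, hEω, rfl⟩
      · rintro ⟨y, ⟨-, hgy⟩, hEω, hy⟩
        exact ⟨hEω, by rw [hy, hgy]⟩
    have hdisj : ((R.filter (fun y => g y = x)) : Set Y).PairwiseDisjoint
        (fun y => E ∩ u ⁻¹' {y}) := by
      intro y _ z _ hyz
      refine Set.disjoint_left.mpr fun ω hω hω' => hyz ?_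
      have h1 : u ω = y := hω.2
      have h2 : u ω = z := hω'.2
      rw [← h1, ← h2]
    rw [hdecomp, measure_biUnion_finset hdisj (fun y _ => hE.inter (hfib y)),
      ENNReal.toReal_sum (fun y _ => measure_ne_top μ _), Finset.sum_smul]
    refine Finset.sum_congr rfl fun y hy => ?_
    rw [(Finset.mem_filter.mp hy).2]
  rw [Finset.sum_congr rfl key]
  exact Finset.sum_fiberwise_of_maps_to (fun y hy => Finset.mem_image_of_mem g hy) _

lemma comp_eq_sum_indicator (u : Ω → Y) (hu : (Set.range u).Finite) (g : Y → ℝ) :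
    (fun ω => g (u ω))
      = fun ω => ∑ y ∈ hu.toFinset, (u ⁻¹' {y}).indicator (fun _ => g y) ω := by
  classical
  funext ω
  rw [Finset.sum_eq_single_of_mem (u ω) (hu.mem_toFinset.mpr ⟨ω, rfl⟩)]
  · simp [Set.indicator_of_mem, Set.mem_preimage]
  · intro y _ hy
    apply Set.indicator_of_notMem
    simp only [Set.mem_preimage, Set.mem_singleton_iff]
    exact fun h => hy h.symm

lemma integrable_comp_simple (u : Ω → Y) (hu : (Set.range u).Finite)
    (hfib : ∀ y : Y, MeasurableSet (u ⁻¹' {y})) (g : Y → ℝ) :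
    Integrable (fun ω => g (u ω)) μ := by
  rw [comp_eq_sum_indicator u hu g]
  exact integrable_finset_sum _ fun y _ => (integrable_const (g y)).indicator (hfib y)

lemma setIntegral_comp_simple (u : Ω → Y) (hu : (Set.range u).Finite)
    (hfib : ∀ y : Y, MeasurableSet (u ⁻¹' {y})) (g : Y → ℝ) (E : Set Ω) :
    ∫ ω in E, g (u ω) ∂μ = ∑ y ∈ hu.toFinset, (μ (E ∩ u ⁻¹' {y})).toReal * g y := by
  rw [show (fun ω => g (u ω)) = _ from comp_eq_sum_indicator u hu g]
  rw [integral_finset_sum _ fun y _ =>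
    ((integrable_const (g y)).indicator (hfib y)).restrict]
  exact Finset.sum_congr rfl fun y _ => by
    rw [setIntegral_indicator (hfib y), setIntegral_const, smul_eq_mul]
    rfl

lemma pair_finite {s₁ s₂ : Ω → X} (h₁ : IsMeasSimple s₁) (h₂ : IsMeasSimple s₂) :
    (Set.range (fun ω => (s₁ ω, s₂ ω))).Finite :=
  (h₁.1.prod h₂.1).subset (by rintro ⟨a, b⟩ ⟨ω, h⟩; cases h; exact ⟨⟨ω, rfl⟩, ⟨ω, rfl⟩⟩)

lemma pair_fib {s₁ s₂ : Ω → X} (h₁ : IsMeasSimple s₁) (h₂ : IsMeasSimple s₂) (y : X × X) :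
    MeasurableSet ((fun ω => (s₁ ω, s₂ ω)) ⁻¹' {y}) := by
  have h : (fun ω => (s₁ ω, s₂ ω)) ⁻¹' {y} = s₁ ⁻¹' {y.1} ∩ s₂ ⁻¹' {y.2} := by
    ext ω; simp [Prod.ext_iff]
  rw [h]; exact (h₁.2 y.1).inter (h₂.2 y.2)

lemma integrable_seminorm_sub {s₁ s₂ : Ω → X} (h₁ : IsMeasSimple s₁) (h₂ : IsMeasSimple s₂)
    (q : Seminorm ℝ X) : Integrable (fun ω => q (s₁ ω - s₂ ω)) μ :=
  integrable_comp_simple _ (pair_finite h₁ h₂) (pair_fib h₁ h₂)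
    (fun y : X × X => q (y.1 - y.2))

lemma seminorm_simpleIntegral_sub_le {s₁ s₂ : Ω → X} (h₁ : IsMeasSimple s₁)
    (h₂ : IsMeasSimple s₂) (q : Seminorm ℝ X) {E : Set Ω} (hE : MeasurableSet E) :
    q (simpleIntegral μ s₁ E - simpleIntegral μ s₂ E) ≤ ∫ ω in E, q (s₁ ω - s₂ ω) ∂μ := by
  classical
  set u : Ω → X × X := fun ω => (s₁ ω, s₂ ω) with hu_def
  have hu := pair_finite h₁ h₂
  have hfib := pair_fib h₁ h₂
  have e₁ : simpleIntegral μ s₁ E = ∑ y ∈ hu.toFinset, (μ (E ∩ u ⁻¹' {y})).toReal • y.1 :=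
    simpleIntegral_comp u hu hfib Prod.fst hE
  have e₂ : simpleIntegral μ s₂ E = ∑ y ∈ hu.toFinset, (μ (E ∩ u ⁻¹' {y})).toReal • y.2 :=
    simpleIntegral_comp u hu hfib Prod.snd hE
  have e₃ : ∫ ω in E, q (s₁ ω - s₂ ω) ∂μ
      = ∑ y ∈ hu.toFinset, (μ (E ∩ u ⁻¹' {y})).toReal * q (y.1 - y.2) :=
    setIntegral_comp_simple u hu hfib (fun y => q (y.1 - y.2)) E
  rw [e₁, e₂, e₃, ← Finset.sum_sub_distrib]
  simp_rw [← smul_sub]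
  refine (seminorm_sum_le q _ _).trans (le_of_eq (Finset.sum_congr rfl fun y _ => ?_))
  rw [map_smul_eq_mul, Real.norm_of_nonneg ENNReal.toReal_nonneg]

lemma limits_dist_zero {f : Ω → X} {q p₁ p₂ : Seminorm ℝ X}
    (hq₁ : ∀ x, q x ≤ p₁ x) (hq₂ : ∀ x, q x ≤ p₂ x)
    {fn₁ fn₂ : ℕ → Ω → X} {Z₁ Z₂ : Set Ω}
    (W₁ : IsPBochnerWitness μ p₁ f fn₁ Z₁) (W₂ : IsPBochnerWitness μ p₂ f fn₂ Z₂)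
    {E : Set Ω} (hE : MeasurableSet E) {x₁ x₂ : X}
    (h₁ : Tendsto (fun n => p₁ (x₁ - simpleIntegral μ (fn₁ n) E)) atTop (𝓝 0))
    (h₂ : Tendsto (fun n => p₂ (x₂ - simpleIntegral μ (fn₂ n) E)) atTop (𝓝 0)) :
    q (x₁ - x₂) = 0 := by
  have key : ∀ n : ℕ, q (x₁ - x₂)
      ≤ p₁ (x₁ - simpleIntegral μ (fn₁ n) E)
        + ((∫ t, p₁ (fn₁ n t - f t) ∂μ) + (∫ t, p₂ (fn₂ n t - f t) ∂μ))
        + p₂ (x₂ - simpleIntegral μ (fn₂ n) E) := by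
    intro n
    set I₁ := simpleIntegral μ (fn₁ n) E
    set I₂ := simpleIntegral μ (fn₂ n) E
    have t1 : q (x₁ - x₂) ≤ q (x₁ - I₁) + q (I₁ - I₂) + q (I₂ - x₂) := by
      have h : x₁ - x₂ = (x₁ - I₁) + (I₁ - I₂) + (I₂ - x₂) := by abel
      rw [h]
      exact (map_add_le_add q _ _).trans (by gcongr; exact map_add_le_add q _ _)
    have t2 : q (x₁ - I₁) ≤ p₁ (x₁ - I₁) := hq₁ _
    have t4 : q (I₂ - x₂) ≤ p₂ (x₂ - I₂) := by
      rw [← neg_sub, map_neg_eq_map]; exact hq₂ _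
    have t3 : q (I₁ - I₂) ≤ (∫ t, p₁ (fn₁ n t - f t) ∂μ) + (∫ t, p₂ (fn₂ n t - f t) ∂μ) := by
      have hqint := integrable_seminorm_sub (μ := μ) (W₁.1 n) (W₂.1 n) q
      have step1 : q (I₁ - I₂) ≤ ∫ ω in E, q (fn₁ n ω - fn₂ n ω) ∂μ :=
        seminorm_simpleIntegral_sub_le (W₁.1 n) (W₂.1 n) q hE
      have step2 : ∫ ω in E, q (fn₁ n ω - fn₂ n ω) ∂μ ≤ ∫ ω, q (fn₁ n ω - fn₂ n ω) ∂μ :=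
        setIntegral_le_integral hqint (Eventually.of_forall fun ω => apply_nonneg q _)
      have step3 : ∫ ω, q (fn₁ n ω - fn₂ n ω) ∂μ
          ≤ ∫ ω, (p₁ (fn₁ n ω - f ω) + p₂ (fn₂ n ω - f ω)) ∂μ := by
        refine integral_mono hqint ((W₁.2.2.2.2.1 n).add (W₂.2.2.2.2.1 n)) fun ω => ?_
        have h : fn₁ n ω - fn₂ n ω = (fn₁ n ω - f ω) + (f ω - fn₂ n ω) := by abel
        calc q (fn₁ n ω - fn₂ n ω)
            ≤ q (fn₁ n ω - f ω) + q (f ω - fn₂ n ω) := by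
              rw [h]; exact map_add_le_add q _ _
          _ ≤ p₁ (fn₁ n ω - f ω) + p₂ (fn₂ n ω - f ω) := by
              refine add_le_add (hq₁ _) ?_
              calc q (f ω - fn₂ n ω) ≤ p₂ (f ω - fn₂ n ω) := hq₂ _
                _ = p₂ (fn₂ n ω - f ω) := by rw [← neg_sub, map_neg_eq_map]
      rw [integral_add (W₁.2.2.2.2.1 n) (W₂.2.2.2.2.1 n)] at step3
      exact step1.trans (step2.trans step3)
    linarith
  have hlim : Tendsto (fun n => p₁ (x₁ - simpleIntegral μ (fn₁ n) E)
        + ((∫ t, p₁ (fn₁ n t - f t) ∂μ) + (∫ t, p₂ (fn₂ n t - f t) ∂μ))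
        + p₂ (x₂ - simpleIntegral μ (fn₂ n) E)) atTop (𝓝 0) := by
    have h := (h₁.add ((W₁.2.2.2.2.2.1).add (W₂.2.2.2.2.2.1))).add h₂
    simpa using h
  have hle : q (x₁ - x₂) ≤ 0 := ge_of_tendsto hlim (Eventually.of_forall key)
  exact le_antisymm hle (apply_nonneg q _)

end AuxSimple

section AuxTop

variable {X' : Type*} [AddCommGroup X'] [Module ℝ X'] [TopologicalSpace X']

lemma continuous_finset_sup_seminorm {ι : Type*} (p : ι → Seminorm ℝ X')
    (h : ∀ i, Continuous ⇑(p i)) (s : Finset ι) : Continuous ⇑(s.sup p) := by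
  classical
  induction s using Finset.cons_induction with
  | empty =>
      rw [Finset.sup_empty]
      have hb : ⇑(⊥ : Seminorm ℝ X') = fun _ => (0 : ℝ) := rfl
      rw [hb]; exact continuous_const
  | cons i s hi ih =>
      rw [Finset.sup_cons, Seminorm.coe_sup]
      exact (h i).max ih

noncomputable instance : SemilatticeSup {p : Seminorm ℝ X' // Continuous ⇑p} where
  sup σ τ := ⟨σ.1 ⊔ τ.1, by rw [Seminorm.coe_sup]; exact σ.2.max τ.2⟩
  le_sup_left σ τ := by change σ.1 ≤ σ.1 ⊔ τ.1; exact le_sup_left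
  le_sup_right σ τ := by change τ.1 ≤ σ.1 ⊔ τ.1; exact le_sup_right
  sup_le σ τ ρ h₁ h₂ := by change σ.1 ⊔ τ.1 ≤ ρ.1; exact sup_le h₁ h₂

instance : Nonempty {p : Seminorm ℝ X' // Continuous ⇑p} :=
  ⟨⟨0, by
    have h0 : ⇑(0 : Seminorm ℝ X') = fun _ => (0 : ℝ) := rfl
    rw [h0]; exact continuous_const⟩⟩

end AuxTop

section AuxBall

variable {X' : Type*} [AddCommGroup X'] [Module ℝ X'] [UniformSpace X']
  [IsUniformAddGroup X'] [ContinuousSMul ℝ X'] [LocallyConvexSpace ℝ X']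

lemma exists_seminorm_ball_subset {V : Set X'} (hV : V ∈ 𝓝 (0 : X')) :
    ∃ q : Seminorm ℝ X', Continuous ⇑q ∧ ∃ r : ℝ, 0 < r ∧ {x : X' | q x < r} ⊆ V := by
  have hws := with_gaugeSeminormFamily (𝕜 := ℝ) (E := X')
  obtain ⟨⟨s, r⟩, hr, hsub⟩ := hws.hasBasis_zero_ball.mem_iff.mp hV
  refine ⟨s.sup (gaugeSeminormFamily ℝ X'),
    continuous_finset_sup_seminorm _ (fun i => hws.continuous_seminorm i) s, r, hr, ?_⟩
  intro x hx
  exact hsub (by simpa [Seminorm.mem_ball_zero] using hx)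

end AuxBall

variable {X : Type*} [AddCommGroup X] [Module ℝ X] [UniformSpace X]
  [IsUniformAddGroup X] [ContinuousSMul ℝ X] [LocallyConvexSpace ℝ X] [T2Space X]
  [CompleteSpace X]
/-- in a complete Hausdorff locally convex space, a function which
is `p`-Bochner integrable for every continuous seminorm `p` is integrable by
seminorm. -/
theorem stmt6 (μ : Measure Ω) [IsFiniteMeasure μ] [μ.IsComplete]
    (f : Ω → X) (hf : ∀ p : Seminorm ℝ X, Continuous ⇑p → IsPBochner μ p f) :
    IntegrableBySeminorm μ f := by
  classical
  haveI := Filter.atTop_neBot (α := {p : Seminorm ℝ X // Continuous ⇑p})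
  -- choose witnesses for each continuous seminorm
  have hW : ∀ σ : {p : Seminorm ℝ X // Continuous ⇑p},
      ∃ (fn : ℕ → Ω → X) (Z : Set Ω), IsPBochnerWitness μ σ.1 f fn Z :=
    fun σ => hf σ.1 σ.2
  choose fn Zp W using hW
  -- choose the p-limits over each measurable set
  have hxE : ∀ (σ : {p : Seminorm ℝ X // Continuous ⇑p}) (E : Set Ω), MeasurableSet E →
      ∃ x : X, Tendsto (fun n => σ.1 (x - simpleIntegral μ (fn σ n) E)) atTop (𝓝 0) :=
    fun σ E hE => (W σ).2.2.2.2.2.2 E hE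
  choose x hx using hxE
  -- distances are zero
  have hzero : ∀ (σ τ ρ : {p : Seminorm ℝ X // Continuous ⇑p}), σ ≤ τ → σ ≤ ρ →
      ∀ (E : Set Ω) (hE : MeasurableSet E), σ.1 (x τ E hE - x ρ E hE) = 0 := by
    intro σ τ ρ hστ hσρ E hE
    exact limits_dist_zero (Seminorm.le_def.mp hστ) (Seminorm.le_def.mp hσρ)
      (W τ) (W ρ) hE (hx τ E hE) (hx ρ E hE)
  -- construct the common limit over each measurable set
  have hlimex : ∀ (E : Set Ω) (hE : MeasurableSet E), ∃ y : X,
      ∀ σ : {p : Seminorm ℝ X // Continuous ⇑p}, σ.1 (y - x σ E hE) = 0 := by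
    intro E hE
    have hcauchy : Cauchy (map (fun σ : {p : Seminorm ℝ X // Continuous ⇑p} => x σ E hE)
        atTop) := by
      refine cauchy_iff.mpr ⟨map_neBot, ?_⟩
      intro s hs
      rw [uniformity_eq_comap_nhds_zero X] at hs
      obtain ⟨V, hV, hVs⟩ := Filter.mem_comap.mp hs
      obtain ⟨q, hq, r, hr, hball⟩ := exists_seminorm_ball_subset hV
      set σ₀ : {p : Seminorm ℝ X // Continuous ⇑p} := ⟨q, hq⟩
      refine ⟨(fun σ => x σ E hE) '' Set.Ici σ₀, image_mem_map (Ici_mem_atTop σ₀), ?_⟩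
      rintro ⟨a, b⟩ ⟨⟨τ, hτ, rfl⟩, ⟨ρ, hρ, rfl⟩⟩
      apply hVs
      have hz : q (x ρ E hE - x τ E hE) = 0 := hzero σ₀ ρ τ hρ hτ E hE
      exact hball (by simpa [hz] using hr)
    obtain ⟨y, hy⟩ := CompleteSpace.complete hcauchy
    have hy' : Tendsto (fun σ : {p : Seminorm ℝ X // Continuous ⇑p} => x σ E hE)
        atTop (𝓝 y) := hy
    refine ⟨y, fun σ => ?_⟩
    have h1 : Tendsto (fun τ : {p : Seminorm ℝ X // Continuous ⇑p} =>
        σ.1 (y - x τ E hE)) atTop (𝓝 0) := by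
      have hsub : Tendsto (fun τ : {p : Seminorm ℝ X // Continuous ⇑p} =>
          y - x τ E hE) atTop (𝓝 (y - y)) := tendsto_const_nhds.sub hy'
      rw [sub_self] at hsub
      have hcomp := (σ.2.tendsto 0).comp hsub
      simpa [Function.comp_def, map_zero] using hcomp
    have h2 : ∀ᶠ τ in (atTop : Filter {p : Seminorm ℝ X // Continuous ⇑p}),
        σ.1 (y - x σ E hE) ≤ σ.1 (y - x τ E hE) := by
      filter_upwards [Ici_mem_atTop σ] with τ hτ
      have hz : σ.1 (x τ E hE - x σ E hE) = 0 := hzero σ τ σ hτ le_rfl E hE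
      calc σ.1 (y - x σ E hE)
          ≤ σ.1 (y - x τ E hE) + σ.1 (x τ E hE - x σ E hE) := by
            have h : y - x σ E hE = (y - x τ E hE) + (x τ E hE - x σ E hE) := by abel
            rw [h]; exact map_add_le_add _ _ _
        _ = σ.1 (y - x τ E hE) := by rw [hz, add_zero]
    exact le_antisymm (ge_of_tendsto h1 h2) (apply_nonneg _ _)
  choose I hI using hlimex
  refine ⟨fun E => if hE : MeasurableSet E then I E hE else 0,
    fun p => if hp : Continuous ⇑p then fn ⟨p, hp⟩ else fun _ _ => 0, ?_, ?_⟩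
  · intro p hp
    simp only [dif_pos hp]
    exact ⟨Zp ⟨p, hp⟩, (W ⟨p, hp⟩).1, (W ⟨p, hp⟩).2.1, (W ⟨p, hp⟩).2.2.1,
      (W ⟨p, hp⟩).2.2.2.1, (W ⟨p, hp⟩).2.2.2.2.1, (W ⟨p, hp⟩).2.2.2.2.2.1⟩
  · intro E hE p hp
    simp only [dif_pos hE, dif_pos hp]
    set σ : {p : Seminorm ℝ X // Continuous ⇑p} := ⟨p, hp⟩
    refine squeeze_zero (fun n => apply_nonneg _ _)
      (fun n => ?_) (hx σ E hE)
    have hz : p (I E hE - x σ E hE) = 0 := hI E hE σ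
    calc p (I E hE - simpleIntegral μ (fn σ n) E)
        ≤ p (I E hE - x σ E hE) + p (x σ E hE - simpleIntegral μ (fn σ n) E) := by
          have h : I E hE - simpleIntegral μ (fn σ n) E
              = (I E hE - x σ E hE) + (x σ E hE - simpleIntegral μ (fn σ n) E) := by abel
          rw [h]; exact map_add_le_add _ _ _
      _ = p (x σ E hE - simpleIntegral μ (fn σ n) E) := by rw [hz, zero_add]
end

section
/- Let X be a complete Hausdorff locally convex topological vector space with the following Radon–Nikodym property with respect to (Ω, Σ, μ): every vector measure m : Σ → X of bounded variation with m ≪ μ is the indefinite integral of an integrable by seminorm function. Then X is B-locally convex with respect to (Ω, Σ, μ). -/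
open MeasureTheory Filter Topology

variable {Ω : Type*} [MeasurableSpace Ω]

set_option linter.unusedSectionVars false
set_option linter.unusedVariables false
section Simple

variable {X : Type*} [AddCommGroup X] [Module ℝ X] {μ : Measure Ω}

lemma sem_sub_rev (p : Seminorm ℝ X) (x y : X) : p (x - y) = p (y - x) := by
  rw [← neg_sub, map_neg_eq_map]

lemma sem_sum_le (p : Seminorm ℝ X) {ι : Type*} (s : Finset ι) (f : ι → X) :
    p (∑ i ∈ s, f i) ≤ ∑ i ∈ s, p (f i) := by
  classical
  induction s using Finset.induction_on with
  | empty => simp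
  | insert _ _ hx ih =>
    rw [Finset.sum_insert hx, Finset.sum_insert hx]
    exact le_trans (map_add_le_add p _ _) (by gcongr)

lemma sem_triangle (p : Seminorm ℝ X) (x y z : X) : p (x - z) ≤ p (x - y) + p (y - z) := by
  have : x - z = (x - y) + (y - z) := by abel
  rw [this]; exact map_add_le_add p _ _

lemma IsMeasSimple.measurable_comp {s : Ω → X} (hs : IsMeasSimple s) (φ : X → ℝ) :
    Measurable fun t => φ (s t) := by
  classical
  intro B _
  have : (fun t => φ (s t)) ⁻¹' B = ⋃ x ∈ {x ∈ hs.1.toFinset | φ x ∈ B}, s ⁻¹' {x} := by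
    ext t
    simp only [Set.mem_preimage, Set.mem_iUnion, Finset.mem_filter, Set.Finite.mem_toFinset,
      Set.mem_singleton_iff, exists_prop]
    constructor
    · intro h; exact ⟨s t, ⟨⟨t, rfl⟩, h⟩, rfl⟩
    · rintro ⟨x, ⟨-, hx⟩, rfl⟩; exact hx
  rw [this]
  exact Finset.measurableSet_biUnion _ fun x _ => hs.2 x

lemma IsMeasSimple.integrable_comp [IsFiniteMeasure μ] {s : Ω → X}
    (hs : IsMeasSimple s) (φ : X → ℝ) : Integrable (fun t => φ (s t)) μ := by
  have hfin : ((fun x => ‖φ x‖) '' Set.range s).Finite := hs.1.image _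
  rcases hfin.bddAbove with ⟨C, hC⟩
  exact Integrable.mono' (integrable_const C) ((hs.measurable_comp φ).aestronglyMeasurable)
    (Filter.Eventually.of_forall fun t => hC ⟨s t, ⟨t, rfl⟩, rfl⟩)

lemma IsMeasSimple.sub {s t : Ω → X} (hs : IsMeasSimple s) (ht : IsMeasSimple t) :
    IsMeasSimple (fun ω => s ω - t ω) := by
  constructor
  · apply Set.Finite.subset (Set.Finite.image2 (· - ·) hs.1 ht.1)
    rintro _ ⟨ω, rfl⟩; exact Set.mem_image2_of_mem ⟨ω, rfl⟩ ⟨ω, rfl⟩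
  · intro x
    have : (fun ω => s ω - t ω) ⁻¹' {x} = ⋃ a ∈ hs.1.toFinset, (s ⁻¹' {a} ∩ t ⁻¹' {a - x}) := by
      ext ω
      simp only [Set.mem_preimage, Set.mem_singleton_iff, Set.mem_iUnion, Set.mem_inter_iff,
        Set.Finite.mem_toFinset, exists_prop]
      constructor
      · intro h; exact ⟨s ω, ⟨ω, rfl⟩, rfl, by rw [← h]; abel⟩
      · rintro ⟨a, -, rfl, h2⟩; rw [h2]; abel
    rw [this]
    exact MeasurableSet.biUnion hs.1.toFinset.countable_toSet
      fun a _ => (hs.2 a).inter (ht.2 _)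

lemma simpleIntegral_eq_sum {s : Ω → X} (hs : IsMeasSimple s) {A : Finset X}
    (hA : Set.range s ⊆ ↑A) (E : Set Ω) :
    simpleIntegral μ s E = ∑ x ∈ A, (μ (E ∩ s ⁻¹' {x})).toReal • x := by
  apply finsum_eq_finset_sum_of_support_subset
  intro x hx
  simp only [Function.mem_support] at hx
  by_contra hxA
  apply hx
  have hfib : s ⁻¹' {x} = ∅ := by
    ext ω
    simp only [Set.mem_preimage, Set.mem_singleton_iff, Set.mem_empty_iff_false, iff_false]
    intro h; exact hxA (hA ⟨ω, h⟩)
  rw [hfib]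
  simp

lemma measure_eq_sum_fibers {t : Ω → X} (ht : IsMeasSimple t) {E : Set Ω}
    (hE : MeasurableSet E) :
    μ E = ∑ b ∈ ht.1.toFinset, μ (E ∩ t ⁻¹' {b}) := by
  conv_lhs => rw [show E = ⋃ b ∈ ht.1.toFinset, E ∩ t ⁻¹' {b} by
    ext ω
    simp only [Set.mem_iUnion, Set.mem_inter_iff, Set.mem_preimage, Set.mem_singleton_iff,
      Set.Finite.mem_toFinset, exists_prop]
    constructor
    · intro h; exact ⟨t ω, ⟨ω, rfl⟩, h, rfl⟩
    · rintro ⟨b, -, h, -⟩; exact h]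
  refine measure_biUnion_finset ?_ fun b _ => hE.inter (ht.2 b)
  intro a _ b _ hab
  refine Set.disjoint_left.2 fun ω ⟨_, ha⟩ ⟨_, hb⟩ => hab ?_
  rw [← ha, ← hb]

end Simple

section Simple2
variable {X : Type*} [AddCommGroup X] [Module ℝ X] {μ : Measure Ω} [IsFiniteMeasure μ]

/-- Pair decomposition of the simple integral. -/
lemma simpleIntegral_pair {s t u : Ω → X} (hs : IsMeasSimple s) (ht : IsMeasSimple t)
    (hu : IsMeasSimple u) (g : X × X → X) (hg : ∀ ω, u ω = g (s ω, t ω))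
    {E : Set Ω} (hE : MeasurableSet E) :
    simpleIntegral μ u E =
      ∑ ab ∈ hs.1.toFinset ×ˢ ht.1.toFinset,
        (μ (E ∩ s ⁻¹' {ab.1} ∩ t ⁻¹' {ab.2})).toReal • g ab := by
  classical
  set A := hs.1.toFinset
  set B := ht.1.toFinset
  set D := (A ×ˢ B).image g with hD
  have hrange : Set.range u ⊆ ↑D := by
    rintro _ ⟨ω, rfl⟩
    rw [hg ω]
    exact Finset.mem_coe.2 (Finset.mem_image_of_mem g (Finset.mk_mem_product
      (hs.1.mem_toFinset.2 ⟨ω, rfl⟩) (ht.1.mem_toFinset.2 ⟨ω, rfl⟩)))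
  rw [simpleIntegral_eq_sum hu hrange E]
  have key : ∀ x : X, (μ (E ∩ u ⁻¹' {x})).toReal =
      ∑ ab ∈ A ×ˢ B, (if g ab = x then (μ (E ∩ s ⁻¹' {ab.1} ∩ t ⁻¹' {ab.2})).toReal else 0) := by
    intro x
    have h1 : μ (E ∩ u ⁻¹' {x}) =
        ∑ a ∈ A, ∑ b ∈ B, μ (E ∩ u ⁻¹' {x} ∩ s ⁻¹' {a} ∩ t ⁻¹' {b}) := by
      rw [measure_eq_sum_fibers hs (hE.inter (hu.2 x))]
      exact Finset.sum_congr rfl fun a _ =>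
        measure_eq_sum_fibers ht ((hE.inter (hu.2 x)).inter (hs.2 a))
    have h2 : ∀ a b : X, E ∩ u ⁻¹' {x} ∩ s ⁻¹' {a} ∩ t ⁻¹' {b} =
        if g (a, b) = x then E ∩ s ⁻¹' {a} ∩ t ⁻¹' {b} else ∅ := by
      intro a b
      split_ifs with h
      · ext ω
        simp only [Set.mem_inter_iff, Set.mem_preimage, Set.mem_singleton_iff]
        constructor
        · rintro ⟨⟨⟨h1', -⟩, h2'⟩, h3'⟩; exact ⟨⟨h1', h2'⟩, h3'⟩
        · rintro ⟨⟨h1', h2'⟩, h3'⟩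
          refine ⟨⟨⟨h1', ?_⟩, h2'⟩, h3'⟩
          rw [hg ω, h2', h3', h]
      · ext ω
        simp only [Set.mem_inter_iff, Set.mem_preimage, Set.mem_singleton_iff,
          Set.mem_empty_iff_false, iff_false]
        rintro ⟨⟨⟨-, hx⟩, ha⟩, hb⟩
        exact h (by rw [← ha, ← hb, ← hg ω, hx])
    have h1' : μ (E ∩ u ⁻¹' {x}) =
        ∑ ab ∈ A ×ˢ B, μ (E ∩ u ⁻¹' {x} ∩ s ⁻¹' {ab.1} ∩ t ⁻¹' {ab.2}) := by
      rw [h1, ← Finset.sum_product']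
    rw [h1', ENNReal.toReal_sum (fun ab _ => measure_ne_top μ _)]
    refine Finset.sum_congr rfl fun ab _ => ?_
    rcases ab with ⟨a, b⟩
    rw [h2 a b]
    split_ifs with h
    · rfl
    · simp
  calc ∑ x ∈ D, (μ (E ∩ u ⁻¹' {x})).toReal • x
      = ∑ x ∈ D, ∑ ab ∈ A ×ˢ B,
          (if g ab = x then (μ (E ∩ s ⁻¹' {ab.1} ∩ t ⁻¹' {ab.2})).toReal • x else 0) := by
        refine Finset.sum_congr rfl fun x _ => ?_
        rw [key x, Finset.sum_smul]
        exact Finset.sum_congr rfl fun ab _ => by split_ifs <;> simp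
    _ = ∑ ab ∈ A ×ˢ B, ∑ x ∈ D,
          (if g ab = x then (μ (E ∩ s ⁻¹' {ab.1} ∩ t ⁻¹' {ab.2})).toReal • x else 0) :=
        Finset.sum_comm
    _ = ∑ ab ∈ A ×ˢ B, (μ (E ∩ s ⁻¹' {ab.1} ∩ t ⁻¹' {ab.2})).toReal • g ab := by
        refine Finset.sum_congr rfl fun ab hab => ?_
        have : ∀ x ∈ D, (if g ab = x then (μ (E ∩ s ⁻¹' {ab.1} ∩ t ⁻¹' {ab.2})).toReal • x else 0)
            = (if g ab = x then (μ (E ∩ s ⁻¹' {ab.1} ∩ t ⁻¹' {ab.2})).toReal • g ab else 0) := by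
          intro x _; split_ifs with h
          · rw [h]
          · rfl
        rw [Finset.sum_congr rfl this, Finset.sum_ite_eq]
        simp [Finset.mem_image_of_mem g hab]
        exact fun h => absurd (Finset.mem_image_of_mem g hab) h

end Simple2

section Simple3
variable {X : Type*} [AddCommGroup X] [Module ℝ X] {μ : Measure Ω} [IsFiniteMeasure μ]

lemma simpleIntegral_sub {s t : Ω → X} (hs : IsMeasSimple s) (ht : IsMeasSimple t)
    {E : Set Ω} (hE : MeasurableSet E) :
    simpleIntegral μ (fun ω => s ω - t ω) E = simpleIntegral μ s E - simpleIntegral μ t E := by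
  rw [simpleIntegral_pair hs ht (hs.sub ht) (fun ab => ab.1 - ab.2) (fun ω => rfl) hE,
    simpleIntegral_pair hs ht hs Prod.fst (fun ω => rfl) hE,
    simpleIntegral_pair hs ht ht Prod.snd (fun ω => rfl) hE, ← Finset.sum_sub_distrib]
  exact Finset.sum_congr rfl fun ab _ => by rw [smul_sub]

lemma simpleIntegral_union {s : Ω → X} (hs : IsMeasSimple s) {E F : Set Ω}
    (hE : MeasurableSet E) (hF : MeasurableSet F) (hEF : Disjoint E F) :
    simpleIntegral μ s (E ∪ F) = simpleIntegral μ s E + simpleIntegral μ s F := by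
  rw [simpleIntegral_eq_sum hs (hs.1.coe_toFinset.symm.subset) (E ∪ F),
    simpleIntegral_eq_sum hs (hs.1.coe_toFinset.symm.subset) E,
    simpleIntegral_eq_sum hs (hs.1.coe_toFinset.symm.subset) F, ← Finset.sum_add_distrib]
  refine Finset.sum_congr rfl fun x _ => ?_
  rw [← add_smul]
  congr 1
  rw [Set.union_inter_distrib_right, ← ENNReal.toReal_add (measure_ne_top μ _) (measure_ne_top μ _)]
  congr 1
  exact measure_union (hEF.mono Set.inter_subset_left Set.inter_subset_left) (hF.inter (hs.2 x))

/-- Integral of `p ∘ s` over `E` as a finite sum. -/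
lemma setIntegral_seminorm_simple (p : Seminorm ℝ X) {s : Ω → X} (hs : IsMeasSimple s)
    {E : Set Ω} (hE : MeasurableSet E) :
    ∫ t in E, p (s t) ∂μ = ∑ x ∈ hs.1.toFinset, (μ (E ∩ s ⁻¹' {x})).toReal * p x := by
  have hcover : E = ⋃ x ∈ hs.1.toFinset, E ∩ s ⁻¹' {x} := by
    ext ω
    simp only [Set.mem_iUnion, Set.mem_inter_iff, Set.mem_preimage, Set.mem_singleton_iff,
      Set.Finite.mem_toFinset, exists_prop]
    constructor
    · intro h; exact ⟨s ω, ⟨ω, rfl⟩, h, rfl⟩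
    · rintro ⟨b, -, h, -⟩; exact h
  have hdisj : (↑hs.1.toFinset : Set X).PairwiseDisjoint fun x => E ∩ s ⁻¹' {x} := by
    intro a _ b _ hab
    refine Set.disjoint_left.2 fun ω ⟨_, ha⟩ ⟨_, hb⟩ => hab ?_
    rw [← ha, ← hb]
  conv_lhs => rw [hcover]
  rw [integral_biUnion_finset hs.1.toFinset (fun x _ => hE.inter (hs.2 x)) hdisj
    (fun x _ => (hs.integrable_comp p).integrableOn)]
  refine Finset.sum_congr rfl fun x _ => ?_
  rw [setIntegral_congr_fun (hE.inter (hs.2 x)) (g := fun _ => p x)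
    (fun ω hω => by rw [hω.2]), setIntegral_const, smul_eq_mul, measureReal_def]

/-- The fundamental estimate `p (∫_E s) ≤ ∫_E p ∘ s`. -/
lemma seminorm_simpleIntegral_le (p : Seminorm ℝ X) {s : Ω → X} (hs : IsMeasSimple s)
    {E : Set Ω} (hE : MeasurableSet E) :
    p (simpleIntegral μ s E) ≤ ∫ t in E, p (s t) ∂μ := by
  rw [simpleIntegral_eq_sum hs (hs.1.coe_toFinset.symm.subset) E,
    setIntegral_seminorm_simple p hs hE]
  refine le_trans (sem_sum_le p _ _) (Finset.sum_le_sum fun x _ => ?_)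
  rw [map_smul_eq_mul, Real.norm_of_nonneg ENNReal.toReal_nonneg]

lemma simpleIntegral_fiber {s : Ω → X} (hs : IsMeasSimple s) (x₀ : X) :
    simpleIntegral μ s (s ⁻¹' {x₀}) = (μ (s ⁻¹' {x₀})).toReal • x₀ := by
  classical
  rcases Set.eq_empty_or_nonempty (s ⁻¹' {x₀}) with h | h
  · rw [h]
    have : ∀ x : X, (μ ((∅ : Set Ω) ∩ s ⁻¹' {x})).toReal • x = 0 := by
      intro x; simp
    simp only [simpleIntegral]
    rw [finsum_eq_zero_of_forall_eq_zero this]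
    simp
  · have hx₀ : x₀ ∈ Set.range s := by rcases h with ⟨ω, hω⟩; exact ⟨ω, hω⟩
    rw [simpleIntegral_eq_sum hs (hs.1.coe_toFinset.symm.subset) _,
      Finset.sum_eq_single x₀]
    · rw [Set.inter_self]
    · intro x _ hx
      have : s ⁻¹' {x₀} ∩ s ⁻¹' {x} = ∅ := by
        ext ω
        simp only [Set.mem_inter_iff, Set.mem_preimage, Set.mem_singleton_iff,
          Set.mem_empty_iff_false, iff_false]
        rintro ⟨h1, h2⟩; exact hx (by rw [← h1, ← h2])
      rw [this]
      simp
    · intro hmem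
      exact absurd (hs.1.mem_toFinset.2 hx₀) hmem

/-- `∫_Ω p∘s = ∑ p (∫_{fiber} s)`. -/
lemma integral_seminorm_simple_eq_sum_fibers (p : Seminorm ℝ X) {s : Ω → X}
    (hs : IsMeasSimple s) :
    ∫ t, p (s t) ∂μ = ∑ x ∈ hs.1.toFinset, p (simpleIntegral μ s (s ⁻¹' {x})) := by
  rw [← setIntegral_univ, setIntegral_seminorm_simple p hs MeasurableSet.univ]
  refine Finset.sum_congr rfl fun x _ => ?_
  rw [simpleIntegral_fiber hs x, map_smul_eq_mul, Set.univ_inter,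
    Real.norm_of_nonneg ENNReal.toReal_nonneg]

end Simple3

section Simple4
variable {X : Type*} [AddCommGroup X] [Module ℝ X] {μ : Measure Ω} [IsFiniteMeasure μ]

lemma sem_abs_sub_le (p : Seminorm ℝ X) (x y : X) : |p x - p y| ≤ p (x - y) := by
  rw [abs_le]
  constructor
  · have : p y ≤ p (y - x) + p x := by
      calc p y = p (y - x + x) := by rw [sub_add_cancel]
      _ ≤ p (y - x) + p x := map_add_le_add p _ _
    rw [sem_sub_rev] at this
    linarith
  · have : p x ≤ p (x - y) + p y := by
      calc p x = p (x - y + y) := by rw [sub_add_cancel]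
      _ ≤ p (x - y) + p y := map_add_le_add p _ _
    linarith

lemma sem_norm_sub_le (p : Seminorm ℝ X) (x y : X) : ‖p x - p y‖ ≤ p (x - y) := by
  rw [Real.norm_eq_abs]; exact sem_abs_sub_le p x y

lemma sum_setIntegral_fibers {s : Ω → X} (hs : IsMeasSimple s) {g : Ω → ℝ}
    (hg : Integrable g μ) :
    ∑ x ∈ hs.1.toFinset, ∫ t in s ⁻¹' {x}, g t ∂μ = ∫ t, g t ∂μ := by
  have hcover : (Set.univ : Set Ω) = ⋃ x ∈ hs.1.toFinset, s ⁻¹' {x} := by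
    ext ω
    simp only [Set.mem_univ, true_iff, Set.mem_iUnion, Set.mem_preimage,
      Set.mem_singleton_iff, Set.Finite.mem_toFinset, exists_prop]
    exact ⟨s ω, ⟨ω, rfl⟩, rfl⟩
  have hdisj : (↑hs.1.toFinset : Set X).PairwiseDisjoint fun x => s ⁻¹' {x} := by
    intro a _ b _ hab
    refine Set.disjoint_left.2 fun ω ha hb => hab ?_
    rw [← ha, ← hb]
  rw [← setIntegral_univ, hcover,
    integral_biUnion_finset hs.1.toFinset (fun x _ => hs.2 x) hdisj
      (fun x _ => hg.integrableOn)]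

lemma integral_seminorm_eq_zero [μ.IsComplete] (p : Seminorm ℝ X) {h : Ω → X}
    {hn : ℕ → Ω → X} {Z : Set Ω}
    (hsimp : ∀ n, IsMeasSimple (hn n)) (hZ0 : μ Z = 0)
    (hae : ∀ t ∉ Z, Tendsto (fun n => p (hn n t - h t)) atTop (𝓝 0))
    (hint : ∀ n, Integrable (fun t => p (hn n t - h t)) μ)
    (hint0 : Tendsto (fun n => ∫ t, p (hn n t - h t) ∂μ) atTop (𝓝 0))
    (hE : ∀ E : Set Ω, MeasurableSet E →
      Tendsto (fun n => p (simpleIntegral μ (hn n) E)) atTop (𝓝 0)) :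
    Integrable (fun t => p (h t)) μ ∧ ∫ t, p (h t) ∂μ = 0 := by
  set δ : ℕ → ℝ := fun n => ∫ t, p (hn n t - h t) ∂μ with hδ
  have hZae : ∀ᵐ t ∂μ, t ∉ Z := by
    rw [ae_iff]
    simpa using hZ0
  -- (1) integrability of differences
  have hdiff : ∀ n m, Integrable (fun t => p (hn n t - hn m t)) μ := fun n m =>
    ((hsimp n).sub (hsimp m)).integrable_comp p
  -- (2) ∫ p (hn n - hn m) ≤ δ n + δ m
  have bound_nm : ∀ n m, ∫ t, p (hn n t - hn m t) ∂μ ≤ δ n + δ m := by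
    intro n m
    have ptw : ∀ t, p (hn n t - hn m t) ≤ p (hn n t - h t) + p (hn m t - h t) := by
      intro t
      calc p (hn n t - hn m t) ≤ p (hn n t - h t) + p (h t - hn m t) := sem_triangle p _ _ _
      _ = p (hn n t - h t) + p (hn m t - h t) := by rw [sem_sub_rev p (h t)]
    calc ∫ t, p (hn n t - hn m t) ∂μ
        ≤ ∫ t, (p (hn n t - h t) + p (hn m t - h t)) ∂μ :=
          integral_mono (hdiff n m) ((hint n).add (hint m)) ptw
      _ = δ n + δ m := integral_add (hint n) (hint m)
  -- (3) uniform bound on simple integrals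
  have unif : ∀ m, ∀ E : Set Ω, MeasurableSet E →
      p (simpleIntegral μ (hn m) E) ≤ δ m := by
    intro m E hEm
    have hlim : Tendsto (fun k => δ m + δ k + p (simpleIntegral μ (hn k) E)) atTop
        (𝓝 (δ m)) := by
      have : Tendsto (fun k => δ m + δ k + p (simpleIntegral μ (hn k) E)) atTop
          (𝓝 (δ m + 0 + 0)) := ((tendsto_const_nhds.add hint0).add (hE E hEm))
      simpa using this
    refine ge_of_tendsto' hlim fun k => ?_
    calc p (simpleIntegral μ (hn m) E)
          ≤ p (simpleIntegral μ (hn m) E - simpleIntegral μ (hn k) E)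
            + p (simpleIntegral μ (hn k) E) := by
            have := sem_triangle p (simpleIntegral μ (hn m) E) (simpleIntegral μ (hn k) E) 0
            simpa [sub_zero] using this
        _ ≤ δ m + δ k + p (simpleIntegral μ (hn k) E) := by
            gcongr
            rw [← simpleIntegral_sub (hsimp m) (hsimp k) hEm]
            calc p (simpleIntegral μ (fun ω => hn m ω - hn k ω) E)
                ≤ ∫ t in E, p (hn m t - hn k t) ∂μ :=
                  seminorm_simpleIntegral_le p ((hsimp m).sub (hsimp k)) hEm
              _ ≤ ∫ t, p (hn m t - hn k t) ∂μ :=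
                  setIntegral_le_integral (hdiff m k)
                    (Filter.Eventually.of_forall fun t => apply_nonneg p _)
              _ ≤ δ m + δ k := bound_nm m k
  -- (4) v n ≤ δ n
  have v_le : ∀ n, ∫ t, p (hn n t) ∂μ ≤ δ n := by
    intro n
    set K : ℝ := ((hsimp n).1.toFinset.card : ℝ)
    have hlim : Tendsto (fun m => δ n + δ m + K * δ m) atTop (𝓝 (δ n)) := by
      have : Tendsto (fun m => δ n + δ m + K * δ m) atTop (𝓝 (δ n + 0 + K * 0)) :=
        (tendsto_const_nhds.add hint0).add (tendsto_const_nhds.mul hint0)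
      simpa using this
    refine ge_of_tendsto' hlim fun m => ?_
    rw [integral_seminorm_simple_eq_sum_fibers p (hsimp n)]
    have step : ∀ x ∈ (hsimp n).1.toFinset,
        p (simpleIntegral μ (hn n) (hn n ⁻¹' {x}))
        ≤ (∫ t in hn n ⁻¹' {x}, p (hn n t - hn m t) ∂μ) + δ m := by
      intro x _
      calc p (simpleIntegral μ (hn n) (hn n ⁻¹' {x}))
          ≤ p (simpleIntegral μ (hn n) (hn n ⁻¹' {x})
              - simpleIntegral μ (hn m) (hn n ⁻¹' {x}))
            + p (simpleIntegral μ (hn m) (hn n ⁻¹' {x})) := by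
            have := sem_triangle p (simpleIntegral μ (hn n) (hn n ⁻¹' {x}))
              (simpleIntegral μ (hn m) (hn n ⁻¹' {x})) 0
            simpa [sub_zero] using this
        _ ≤ (∫ t in hn n ⁻¹' {x}, p (hn n t - hn m t) ∂μ) + δ m := by
            gcongr
            · rw [← simpleIntegral_sub (hsimp n) (hsimp m) ((hsimp n).2 x)]
              exact seminorm_simpleIntegral_le p ((hsimp n).sub (hsimp m)) ((hsimp n).2 x)
            · exact unif m _ ((hsimp n).2 x)
    calc ∑ x ∈ (hsimp n).1.toFinset, p (simpleIntegral μ (hn n) (hn n ⁻¹' {x}))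
        ≤ ∑ x ∈ (hsimp n).1.toFinset,
            ((∫ t in hn n ⁻¹' {x}, p (hn n t - hn m t) ∂μ) + δ m) :=
          Finset.sum_le_sum step
      _ = (∫ t, p (hn n t - hn m t) ∂μ) + K * δ m := by
          rw [Finset.sum_add_distrib, sum_setIntegral_fibers (hsimp n) (hdiff n m),
            Finset.sum_const, nsmul_eq_mul]
      _ ≤ δ n + δ m + K * δ m := by
          gcongr
          exact bound_nm n m
  -- (5) measurability of p ∘ h
  have hmeas : AEStronglyMeasurable (fun t => p (h t)) μ := by
    have htend : ∀ᵐ t ∂μ, Tendsto (fun n => p (hn n t)) atTop (𝓝 (p (h t))) := by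
      filter_upwards [hZae] with t ht
      have h1 : Tendsto (fun n => p (hn n t) - p (h t)) atTop (𝓝 0) := by
        apply squeeze_zero_norm (fun n => sem_abs_sub_le p (hn n t) (h t)) (hae t ht)
      have := h1.add_const (p (h t))
      simpa using this
    exact (aemeasurable_of_tendsto_metrizable_ae atTop
      (fun n => ((hsimp n).measurable_comp p).aemeasurable) htend).aestronglyMeasurable
  -- (6) integrability of p ∘ h
  have ptw0 : ∀ n, ∀ t : Ω, p (h t) ≤ p (hn n t - h t) + p (hn n t) := by
    intro n t
    calc p (h t) = p (h t - hn n t + hn n t) := by rw [sub_add_cancel]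
    _ ≤ p (h t - hn n t) + p (hn n t) := map_add_le_add p _ _
    _ = p (hn n t - h t) + p (hn n t) := by rw [sem_sub_rev]
  have hinteg : Integrable (fun t => p (h t)) μ := by
    refine Integrable.mono' ((hint 0).add ((hsimp 0).integrable_comp p)) hmeas
      (Filter.Eventually.of_forall fun t => ?_)
    rw [Real.norm_of_nonneg (apply_nonneg p _)]
    exact ptw0 0 t
  refine ⟨hinteg, le_antisymm ?_ ?_⟩
  · have hlim : Tendsto (fun n => δ n + δ n) atTop (𝓝 (0:ℝ)) := by
      simpa using (hint0.add hint0)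
    refine ge_of_tendsto' hlim fun n => ?_
    calc ∫ t, p (h t) ∂μ
          ≤ ∫ t, (p (hn n t - h t) + p (hn n t)) ∂μ :=
            integral_mono hinteg ((hint n).add ((hsimp n).integrable_comp p)) (ptw0 n)
        _ = δ n + ∫ t, p (hn n t) ∂μ := integral_add (hint n) ((hsimp n).integrable_comp p)
        _ ≤ δ n + δ n := by gcongr; exact v_le n
  · exact integral_nonneg fun t => apply_nonneg p _

end Simple4

section Topo
variable {X : Type*} [AddCommGroup X] [Module ℝ X] [UniformSpace X]
  [IsUniformAddGroup X] [ContinuousSMul ℝ X] [LocallyConvexSpace ℝ X]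

/-- The directed set of continuous seminorms on `X`. -/
def ContSem (X : Type*) [AddCommGroup X] [Module ℝ X] [TopologicalSpace X] : Type _ :=
  {p : Seminorm ℝ X // Continuous ⇑p}

instance : Nonempty (ContSem X) :=
  ⟨⟨0, by rw [Seminorm.coe_zero]; exact continuous_const⟩⟩

noncomputable instance : SemilatticeSup (ContSem X) :=
  Subtype.semilatticeSup (fun p q hp hq => by
    rw [Seminorm.coe_sup]; exact hp.max hq)

lemma ContSem.le_iff {P Q : ContSem X} : P ≤ Q ↔ ∀ x, P.1 x ≤ Q.1 x := by
  exact Seminorm.le_def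

lemma ContSem.le_sup_left' (P Q : ContSem X) : P ≤ P ⊔ Q := le_sup_left
lemma ContSem.le_sup_right' (P Q : ContSem X) : Q ≤ P ⊔ Q := le_sup_right

lemma sem_sub_le (p : Seminorm ℝ X) (x y : X) : p (x - y) ≤ p x + p y := by
  have := sem_triangle p x 0 y
  simpa using this

lemma tendsto_of_seminorms {α : Type*} {l : Filter α} {u : α → X} {y : X}
    (h : ∀ p : Seminorm ℝ X, Continuous ⇑p → Tendsto (fun a => p (u a - y)) l (𝓝 0)) :
    Tendsto u l (𝓝 y) := by
  have hws := with_gaugeSeminormFamily (𝕜 := ℝ) (E := X)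
  rw [hws.tendsto_nhds]
  intro i ε hε
  exact (h _ (hws.continuous_seminorm i)).eventually (gt_mem_nhds hε)

lemma seminorms_separate [T2Space X] {x : X}
    (h : ∀ p : Seminorm ℝ X, Continuous ⇑p → p x = 0) : x = 0 := by
  have : Tendsto (fun _ : ℕ => x) atTop (𝓝 0) := by
    apply tendsto_of_seminorms
    intro p hp
    simp only [sub_zero, h p hp]
    exact tendsto_const_nhds
  exact tendsto_nhds_unique tendsto_const_nhds this

lemma exists_lim [CompleteSpace X] {φ : ContSem X → X}
    (hcomp : ∀ a b : ContSem X, a ≤ b → a.1 (φ a - φ b) = 0) :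
    ∃ x : X, ∀ a : ContSem X, a.1 (x - φ a) = 0 := by
  have hcauchy : Cauchy (Filter.map φ atTop) := by
    constructor
    · exact Filter.map_neBot
    · rw [uniformity_eq_comap_nhds_zero X, Filter.prod_map_map_eq, ← Filter.map_le_iff_le_comap,
        Filter.map_map]
      apply tendsto_of_seminorms (y := (0 : X))
      intro p hp
      set P : ContSem X := ⟨p, hp⟩
      have hev : ∀ᶠ ab : ContSem X × ContSem X in atTop ×ˢ atTop,
          p ((fun x : ContSem X × ContSem X => φ x.2 - φ x.1) ab - 0) = 0 := by
        filter_upwards [(eventually_ge_atTop P).prod_mk (eventually_ge_atTop P)] with ab hab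
        rcases ab with ⟨a, b⟩
        rcases hab with ⟨ha, hb⟩
        have h1 : p (φ b - φ (a ⊔ b)) = 0 := by
          have := hcomp b (a ⊔ b) le_sup_right
          have hle : p (φ b - φ (a ⊔ b)) ≤ b.1 (φ b - φ (a ⊔ b)) :=
            ContSem.le_iff.1 hb _
          have : p (φ b - φ (a ⊔ b)) ≤ 0 := by rw [← this]; exact hle
          exact le_antisymm this (apply_nonneg p _)
        have h2 : p (φ (a ⊔ b) - φ a) = 0 := by
          have h0 := hcomp a (a ⊔ b) le_sup_left
          have hle : p (φ (a ⊔ b) - φ a) ≤ a.1 (φ (a ⊔ b) - φ a) :=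
            ContSem.le_iff.1 ha _
          rw [sem_sub_rev a.1] at hle
          have : p (φ (a ⊔ b) - φ a) ≤ 0 := by rw [← h0]; exact hle
          exact le_antisymm this (apply_nonneg p _)
        have hle : p (φ b - φ a - 0) ≤ p (φ b - φ (a ⊔ b)) + p (φ (a ⊔ b) - φ a) := by
          rw [sub_zero]; exact sem_triangle p _ _ _
        rw [h1, h2] at hle
        simpa using le_antisymm (by simpa using hle) (apply_nonneg p _)
      exact tendsto_const_nhds.congr' (by filter_upwards [hev] with ab h using h.symm)
  rcases CompleteSpace.complete hcauchy with ⟨x, hx⟩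
  rw [Filter.map_le_iff_le_comap, ← Filter.tendsto_iff_comap] at hx
  refine ⟨x, fun P => ?_⟩
  have hten : Tendsto (fun b => P.1 (x - φ b)) atTop (𝓝 0) := by
    have hc : Continuous fun y : X => P.1 (x - y) :=
      P.2.comp (continuous_const.sub continuous_id)
    have := (hc.tendsto x).comp hx
    simpa [Function.comp_def] using this
  have hev : ∀ᶠ b in atTop, P.1 (x - φ P) ≤ P.1 (x - φ b) := by
    filter_upwards [eventually_ge_atTop P] with b hb
    have h0 : P.1 (φ P - φ b) = 0 := hcomp P b hb
    calc P.1 (x - φ P) ≤ P.1 (x - φ b) + P.1 (φ b - φ P) := sem_triangle P.1 _ _ _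
    _ = P.1 (x - φ b) := by rw [sem_sub_rev P.1 (φ b) (φ P), h0, add_zero]
  have := ge_of_tendsto hten hev
  exact le_antisymm this (apply_nonneg P.1 _)

end Topo


variable {X : Type*} [AddCommGroup X] [Module ℝ X] [UniformSpace X]
  [IsUniformAddGroup X] [ContinuousSMul ℝ X] [LocallyConvexSpace ℝ X] [T2Space X]
  [CompleteSpace X]
/-- a complete Hausdorff locally convex space with the
Radon–Nikodym property with respect to `(Ω, Σ, μ)` (every vector measure of
bounded variation which is `μ`-continuous is the indefinite integral of an
integrable by seminorm function) is `B`-locally convex with respect to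
`(Ω, Σ, μ)`. -/
theorem stmt12 (μ : Measure Ω) [IsFiniteMeasure μ] [μ.IsComplete]
    (hRNP : ∀ m : Set Ω → X, IsVectorMeasureOn m → HasBoundedVariation m →
      (∀ Z : Set Ω, MeasurableSet Z → μ Z = 0 → m Z = 0) →
      ∃ f : Ω → X, IntegrableBySeminormWith μ f m) :
    IsBLocallyConvex X μ := by
  classical
  intro F hB hC
  -- choose Bochner witnesses for each continuous seminorm
  choose fn Z hW using fun P : ContSem X => hB P.1 P.2
  have hsimp : ∀ (P : ContSem X) (n : ℕ), IsMeasSimple (fn P n) := fun P => (hW P).1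
  have hZ0 : ∀ P : ContSem X, μ (Z P) = 0 := fun P => (hW P).2.2.1
  have hae : ∀ P : ContSem X, ∀ t ∉ Z P, Tendsto (fun n => P.1 (fn P n t - F P.1 t)) atTop (𝓝 0) :=
    fun P => (hW P).2.2.2.1
  have hint : ∀ (P : ContSem X) (n : ℕ), Integrable (fun t => P.1 (fn P n t - F P.1 t)) μ :=
    fun P => (hW P).2.2.2.2.1
  have hint0 : ∀ P : ContSem X, Tendsto (fun n => ∫ t, P.1 (fn P n t - F P.1 t) ∂μ) atTop (𝓝 0) :=
    fun P => (hW P).2.2.2.2.2.1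
  have hxiex : ∀ P : ContSem X, ∀ E : Set Ω, MeasurableSet E → ∃ x : X,
      Tendsto (fun n => P.1 (x - simpleIntegral μ (fn P n) E)) atTop (𝓝 0) :=
    fun P => (hW P).2.2.2.2.2.2
  set xi : ContSem X → Set Ω → X := fun P E =>
    if hE : MeasurableSet E then (hxiex P E hE).choose else 0 with hxidef
  have hxi : ∀ (P : ContSem X) (E : Set Ω) (hE : MeasurableSet E),
      Tendsto (fun n => P.1 (xi P E - simpleIntegral μ (fn P n) E)) atTop (𝓝 0) := by
    intro P E hE
    simp only [hxidef, dif_pos hE]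
    exact (hxiex P E hE).choose_spec
  -- Lemma A : compatibility of the p-integrals
  have hA : ∀ P Q : ContSem X, P ≤ Q → ∀ E : Set Ω, MeasurableSet E →
      P.1 (xi P E - xi Q E) = 0 := by
    intro P Q hPQ E hE
    obtain ⟨W, hWmeas, hW0, hWae⟩ := hC P.1 Q.1 P.2 Q.2 (ContSem.le_iff.1 hPQ)
    have hmid : ∀ n, P.1 (simpleIntegral μ (fn P n) E - simpleIntegral μ (fn Q n) E)
        ≤ (∫ t, P.1 (fn P n t - F P.1 t) ∂μ) + ∫ t, Q.1 (fn Q n t - F Q.1 t) ∂μ := by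
      intro n
      rw [← simpleIntegral_sub (hsimp P n) (hsimp Q n) hE]
      have h1 : P.1 (simpleIntegral μ (fun ω => fn P n ω - fn Q n ω) E)
          ≤ ∫ t, P.1 (fn P n t - fn Q n t) ∂μ :=
        le_trans (seminorm_simpleIntegral_le P.1 ((hsimp P n).sub (hsimp Q n)) hE)
          (setIntegral_le_integral (((hsimp P n).sub (hsimp Q n)).integrable_comp P.1)
            (Filter.Eventually.of_forall fun t => apply_nonneg _ _))
      refine le_trans h1 ?_
      have hptw : ∀ᵐ t ∂μ, P.1 (fn P n t - fn Q n t)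
          ≤ P.1 (fn P n t - F P.1 t) + Q.1 (fn Q n t - F Q.1 t) := by
        have hWae' : ∀ᵐ t ∂μ, t ∉ W := by rw [ae_iff]; simpa using hW0
        filter_upwards [hWae'] with t ht
        calc P.1 (fn P n t - fn Q n t)
            ≤ P.1 (fn P n t - F P.1 t) + P.1 (F P.1 t - fn Q n t) := sem_triangle _ _ _ _
          _ ≤ P.1 (fn P n t - F P.1 t)
              + (P.1 (F P.1 t - F Q.1 t) + P.1 (F Q.1 t - fn Q n t)) := by
              gcongr
              exact sem_triangle _ _ _ _
          _ = P.1 (fn P n t - F P.1 t) + P.1 (F Q.1 t - fn Q n t) := by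
              rw [hWae t ht, zero_add]
          _ ≤ P.1 (fn P n t - F P.1 t) + Q.1 (fn Q n t - F Q.1 t) := by
              gcongr
              rw [sem_sub_rev]
              exact ContSem.le_iff.1 hPQ _
      calc (∫ t, P.1 (fn P n t - fn Q n t) ∂μ)
          ≤ ∫ t, (P.1 (fn P n t - F P.1 t) + Q.1 (fn Q n t - F Q.1 t)) ∂μ :=
            integral_mono_ae (((hsimp P n).sub (hsimp Q n)).integrable_comp P.1)
              ((hint P n).add (hint Q n)) hptw
        _ = _ := integral_add (hint P n) (hint Q n)
    have hsq : Tendsto (fun n => P.1 (xi P E - simpleIntegral μ (fn P n) E)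
        + ((∫ t, P.1 (fn P n t - F P.1 t) ∂μ) + ∫ t, Q.1 (fn Q n t - F Q.1 t) ∂μ)
        + Q.1 (xi Q E - simpleIntegral μ (fn Q n) E)) atTop (𝓝 0) := by
      have := ((hxi P E hE).add ((hint0 P).add (hint0 Q))).add (hxi Q E hE)
      simpa using this
    refine le_antisymm (ge_of_tendsto' hsq fun n => ?_) (apply_nonneg _ _)
    calc P.1 (xi P E - xi Q E)
        ≤ P.1 (xi P E - simpleIntegral μ (fn P n) E)
          + P.1 (simpleIntegral μ (fn P n) E - xi Q E) := sem_triangle _ _ _ _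
      _ ≤ P.1 (xi P E - simpleIntegral μ (fn P n) E)
          + (P.1 (simpleIntegral μ (fn P n) E - simpleIntegral μ (fn Q n) E)
            + P.1 (simpleIntegral μ (fn Q n) E - xi Q E)) := by
          gcongr
          exact sem_triangle _ _ _ _
      _ ≤ P.1 (xi P E - simpleIntegral μ (fn P n) E)
          + ((∫ t, P.1 (fn P n t - F P.1 t) ∂μ) + ∫ t, Q.1 (fn Q n t - F Q.1 t) ∂μ)
          + Q.1 (xi Q E - simpleIntegral μ (fn Q n) E) := by
          rw [add_assoc]
          gcongr
          · exact hmid n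
          · rw [sem_sub_rev]
            exact ContSem.le_iff.1 hPQ _
  -- definition of the vector measure m
  have hM : ∀ E : Set Ω, MeasurableSet E → ∃ x : X, ∀ P : ContSem X,
      P.1 (x - xi P E) = 0 :=
    fun E hE => exists_lim (fun a b hab => hA a b hab E hE)
  set m : Set Ω → X := fun E =>
    if hE : MeasurableSet E then (hM E hE).choose else 0 with hmdef
  have hm : ∀ (E : Set Ω) (hE : MeasurableSet E) (P : ContSem X),
      P.1 (m E - xi P E) = 0 := by
    intro E hE P
    simp only [hmdef, dif_pos hE]
    exact (hM E hE).choose_spec P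
  -- the dominating integrable function for each seminorm
  have hgP : ∀ P : ContSem X, Integrable (fun t => P.1 (F P.1 t)) μ := by
    intro P
    have hZae : ∀ᵐ t ∂μ, t ∉ Z P := by rw [ae_iff]; simpa using hZ0 P
    have hmeasg : AEStronglyMeasurable (fun t => P.1 (F P.1 t)) μ := by
      have htend : ∀ᵐ t ∂μ, Tendsto (fun n => P.1 (fn P n t)) atTop (𝓝 (P.1 (F P.1 t))) := by
        filter_upwards [hZae] with t ht
        have h1 := squeeze_zero_norm
          (fun n => sem_norm_sub_le P.1 (fn P n t) (F P.1 t)) (hae P t ht)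
        have := h1.add_const (P.1 (F P.1 t))
        simpa using this
      exact (aemeasurable_of_tendsto_metrizable_ae atTop
        (fun n => ((hsimp P n).measurable_comp P.1).aemeasurable) htend).aestronglyMeasurable
    refine Integrable.mono' ((hint P 0).add ((hsimp P 0).integrable_comp P.1)) hmeasg
      (Filter.Eventually.of_forall fun t => ?_)
    rw [Real.norm_of_nonneg (apply_nonneg _ _)]
    calc P.1 (F P.1 t) = P.1 (F P.1 t - fn P 0 t + fn P 0 t) := by rw [sub_add_cancel]
      _ ≤ P.1 (F P.1 t - fn P 0 t) + P.1 (fn P 0 t) := map_add_le_add _ _ _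
      _ = P.1 (fn P 0 t - F P.1 t) + P.1 (fn P 0 t) := by rw [sem_sub_rev]
  -- the fundamental domination:  p (m E) ≤ ∫_E p∘F_p
  have hxibd : ∀ (P : ContSem X) (E : Set Ω), MeasurableSet E →
      P.1 (xi P E) ≤ ∫ t in E, P.1 (F P.1 t) ∂μ := by
    intro P E hE
    have hlim : Tendsto (fun n => P.1 (xi P E - simpleIntegral μ (fn P n) E)
        + (∫ t, P.1 (fn P n t - F P.1 t) ∂μ) + ∫ t in E, P.1 (F P.1 t) ∂μ) atTop
        (𝓝 (∫ t in E, P.1 (F P.1 t) ∂μ)) := by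
      have := ((hxi P E hE).add (hint0 P)).add
        (tendsto_const_nhds (x := ∫ t in E, P.1 (F P.1 t) ∂μ))
      simpa using this
    refine ge_of_tendsto' hlim fun n => ?_
    have h2 : P.1 (simpleIntegral μ (fn P n) E)
        ≤ (∫ t, P.1 (fn P n t - F P.1 t) ∂μ) + ∫ t in E, P.1 (F P.1 t) ∂μ := by
      calc P.1 (simpleIntegral μ (fn P n) E) ≤ ∫ t in E, P.1 (fn P n t) ∂μ :=
            seminorm_simpleIntegral_le P.1 (hsimp P n) hE
        _ ≤ ∫ t in E, (P.1 (fn P n t - F P.1 t) + P.1 (F P.1 t)) ∂μ := by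
            refine integral_mono ((hsimp P n).integrable_comp P.1).integrableOn
              (((hint P n).add (hgP P)).integrableOn) fun t => ?_
            calc P.1 (fn P n t) = P.1 (fn P n t - F P.1 t + F P.1 t) := by rw [sub_add_cancel]
              _ ≤ P.1 (fn P n t - F P.1 t) + P.1 (F P.1 t) := map_add_le_add _ _ _
        _ = (∫ t in E, P.1 (fn P n t - F P.1 t) ∂μ) + ∫ t in E, P.1 (F P.1 t) ∂μ :=
            integral_add ((hint P n).integrableOn) ((hgP P).integrableOn)
        _ ≤ (∫ t, P.1 (fn P n t - F P.1 t) ∂μ) + ∫ t in E, P.1 (F P.1 t) ∂μ := by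
            gcongr ?_ + _
            exact setIntegral_le_integral (hint P n)
              (Filter.Eventually.of_forall fun t => apply_nonneg _ _)
    calc P.1 (xi P E)
        ≤ P.1 (xi P E - simpleIntegral μ (fn P n) E) + P.1 (simpleIntegral μ (fn P n) E) := by
          have := sem_triangle P.1 (xi P E) (simpleIntegral μ (fn P n) E) 0
          simpa [sub_zero] using this
      _ ≤ P.1 (xi P E - simpleIntegral μ (fn P n) E)
          + ((∫ t, P.1 (fn P n t - F P.1 t) ∂μ) + ∫ t in E, P.1 (F P.1 t) ∂μ) :=
          add_le_add le_rfl h2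
      _ = P.1 (xi P E - simpleIntegral μ (fn P n) E)
          + (∫ t, P.1 (fn P n t - F P.1 t) ∂μ) + ∫ t in E, P.1 (F P.1 t) ∂μ := by ring
  have hbd : ∀ (P : ContSem X) (E : Set Ω), MeasurableSet E →
      P.1 (m E) ≤ ∫ t in E, P.1 (F P.1 t) ∂μ := by
    intro P E hE
    calc P.1 (m E) ≤ P.1 (m E - xi P E) + P.1 (xi P E) := by
          have := sem_triangle P.1 (m E) (xi P E) 0
          simpa [sub_zero] using this
      _ = P.1 (xi P E) := by rw [hm E hE P, zero_add]
      _ ≤ ∫ t in E, P.1 (F P.1 t) ∂μ := hxibd P E hE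
  -- additivity of xi and m modulo each seminorm
  have hxiadd : ∀ (P : ContSem X) (E₁ E₂ : Set Ω), MeasurableSet E₁ → MeasurableSet E₂ →
      Disjoint E₁ E₂ → P.1 (xi P (E₁ ∪ E₂) - xi P E₁ - xi P E₂) = 0 := by
    intro P E₁ E₂ h1 h2 hd
    have hsq : Tendsto (fun n => P.1 (xi P (E₁ ∪ E₂) - simpleIntegral μ (fn P n) (E₁ ∪ E₂))
        + P.1 (xi P E₁ - simpleIntegral μ (fn P n) E₁)
        + P.1 (xi P E₂ - simpleIntegral μ (fn P n) E₂)) atTop (𝓝 0) := by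
      have := ((hxi P _ (h1.union h2)).add (hxi P E₁ h1)).add (hxi P E₂ h2)
      simpa using this
    refine le_antisymm (ge_of_tendsto' hsq fun n => ?_) (apply_nonneg _ _)
    have hkey : xi P (E₁ ∪ E₂) - xi P E₁ - xi P E₂
        = (xi P (E₁ ∪ E₂) - simpleIntegral μ (fn P n) (E₁ ∪ E₂))
          - (xi P E₁ - simpleIntegral μ (fn P n) E₁)
          - (xi P E₂ - simpleIntegral μ (fn P n) E₂) := by
      rw [simpleIntegral_union (hsimp P n) h1 h2 hd]
      abel
    rw [hkey]
    calc P.1 ((xi P (E₁ ∪ E₂) - simpleIntegral μ (fn P n) (E₁ ∪ E₂))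
          - (xi P E₁ - simpleIntegral μ (fn P n) E₁)
          - (xi P E₂ - simpleIntegral μ (fn P n) E₂))
        ≤ P.1 ((xi P (E₁ ∪ E₂) - simpleIntegral μ (fn P n) (E₁ ∪ E₂))
            - (xi P E₁ - simpleIntegral μ (fn P n) E₁))
          + P.1 (xi P E₂ - simpleIntegral μ (fn P n) E₂) := sem_sub_le _ _ _
      _ ≤ P.1 (xi P (E₁ ∪ E₂) - simpleIntegral μ (fn P n) (E₁ ∪ E₂))
          + P.1 (xi P E₁ - simpleIntegral μ (fn P n) E₁)
          + P.1 (xi P E₂ - simpleIntegral μ (fn P n) E₂) := by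
          gcongr
          exact sem_sub_le _ _ _
  have hmadd : ∀ (P : ContSem X) (E₁ E₂ : Set Ω), MeasurableSet E₁ → MeasurableSet E₂ →
      Disjoint E₁ E₂ → P.1 (m (E₁ ∪ E₂) - m E₁ - m E₂) = 0 := by
    intro P E₁ E₂ h1 h2 hd
    have hkey : m (E₁ ∪ E₂) - m E₁ - m E₂
        = (m (E₁ ∪ E₂) - xi P (E₁ ∪ E₂)) + (xi P (E₁ ∪ E₂) - xi P E₁ - xi P E₂)
          - (m E₁ - xi P E₁) - (m E₂ - xi P E₂) := by abel
    refine le_antisymm ?_ (apply_nonneg _ _)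
    rw [hkey]
    calc P.1 ((m (E₁ ∪ E₂) - xi P (E₁ ∪ E₂)) + (xi P (E₁ ∪ E₂) - xi P E₁ - xi P E₂)
          - (m E₁ - xi P E₁) - (m E₂ - xi P E₂))
        ≤ P.1 ((m (E₁ ∪ E₂) - xi P (E₁ ∪ E₂)) + (xi P (E₁ ∪ E₂) - xi P E₁ - xi P E₂)
            - (m E₁ - xi P E₁)) + P.1 (m E₂ - xi P E₂) := sem_sub_le _ _ _
      _ ≤ P.1 ((m (E₁ ∪ E₂) - xi P (E₁ ∪ E₂)) + (xi P (E₁ ∪ E₂) - xi P E₁ - xi P E₂))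
          + P.1 (m E₁ - xi P E₁) + P.1 (m E₂ - xi P E₂) := by
          gcongr
          exact sem_sub_le _ _ _
      _ ≤ P.1 (m (E₁ ∪ E₂) - xi P (E₁ ∪ E₂)) + P.1 (xi P (E₁ ∪ E₂) - xi P E₁ - xi P E₂)
          + P.1 (m E₁ - xi P E₁) + P.1 (m E₂ - xi P E₂) := by
          gcongr
          exact map_add_le_add _ _ _
      _ = 0 := by
          rw [hm _ (h1.union h2) P, hm _ h1 P, hm _ h2 P, hxiadd P E₁ E₂ h1 h2 hd]
          ring
  have hm0 : ∀ P : ContSem X, P.1 (m ∅) = 0 := by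
    intro P
    refine le_antisymm ?_ (apply_nonneg _ _)
    have := hbd P ∅ MeasurableSet.empty
    rwa [Measure.restrict_empty, integral_zero_measure] at this
  -- m is a vector measure
  have hVM : IsVectorMeasureOn m := by
    intro E hEmeas hEdisj
    apply tendsto_of_seminorms
    intro p hp
    set P : ContSem X := ⟨p, hp⟩
    set U : ℕ → Set Ω := fun N => ⋃ n ∈ Finset.range N, E n with hUdef
    set R : ℕ → Set Ω := fun N => ⋃ n, E (n + N) with hRdef
    have hUmeas : ∀ N, MeasurableSet (U N) :=
      fun N => Finset.measurableSet_biUnion _ fun n _ => hEmeas n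
    have hRmeas : ∀ N, MeasurableSet (R N) := fun N => MeasurableSet.iUnion fun n => hEmeas _
    have hsplit : ∀ N, (⋃ n, E n) = U N ∪ R N := by
      intro N
      ext ω
      simp only [hUdef, hRdef, Set.mem_iUnion, Set.mem_union, Finset.mem_range, exists_prop]
      constructor
      · rintro ⟨n, hn⟩
        rcases lt_or_ge n N with h | h
        · exact Or.inl ⟨n, h, hn⟩
        · exact Or.inr ⟨n - N, by rwa [Nat.sub_add_cancel h]⟩
      · rintro (⟨n, -, hn⟩ | ⟨n, hn⟩)
        exacts [⟨n, hn⟩, ⟨n + N, hn⟩]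
    have hUR : ∀ N, Disjoint (U N) (R N) := by
      intro N
      refine Set.disjoint_left.2 fun ω hωU hωR => ?_
      simp only [hUdef, Set.mem_iUnion, Finset.mem_range, exists_prop] at hωU
      simp only [hRdef, Set.mem_iUnion] at hωR
      obtain ⟨n, hnN, hω1⟩ := hωU
      obtain ⟨k, hω2⟩ := hωR
      exact Set.disjoint_left.1 (hEdisj (show n ≠ k + N by omega)) hω1 hω2
    have hUadd : ∀ N, p (m (U N) - ∑ n ∈ Finset.range N, m (E n)) = 0 := by
      intro N
      induction N with
      | zero => simpa [hUdef] using hm0 P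
      | succ N ih =>
        have hUsucc : U (N + 1) = E N ∪ U N := by
          simp only [hUdef, Finset.range_add_one]
          exact Finset.set_biUnion_insert _ _ _
        have hdisj : Disjoint (E N) (U N) := by
          refine Set.disjoint_left.2 fun ω hω1 hω2 => ?_
          simp only [hUdef, Set.mem_iUnion, Finset.mem_range, exists_prop] at hω2
          obtain ⟨k, hkN, hω2⟩ := hω2
          exact Set.disjoint_left.1 (hEdisj (show N ≠ k by omega)) hω1 hω2
        have hkey : m (U (N + 1)) - ∑ n ∈ Finset.range (N + 1), m (E n)
            = (m (E N ∪ U N) - m (E N) - m (U N)) + (m (U N) - ∑ n ∈ Finset.range N, m (E n)) := by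
          rw [hUsucc, Finset.sum_range_succ]
          abel
        refine le_antisymm ?_ (apply_nonneg _ _)
        rw [hkey]
        calc p ((m (E N ∪ U N) - m (E N) - m (U N))
              + (m (U N) - ∑ n ∈ Finset.range N, m (E n)))
            ≤ p (m (E N ∪ U N) - m (E N) - m (U N))
              + p (m (U N) - ∑ n ∈ Finset.range N, m (E n)) := map_add_le_add _ _ _
          _ = 0 := by rw [hmadd P (E N) (U N) (hEmeas N) (hUmeas N) hdisj, ih, add_zero]
    set g : Ω → ℝ := fun t => p (F p t) with hgdef
    have hgint : Integrable g μ := hgP P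
    have hsum : HasSum (fun n => ∫ t in E n, g t ∂μ) (∫ t in ⋃ n, E n, g t ∂μ) :=
      hasSum_integral_iUnion hEmeas hEdisj hgint.integrableOn
    have hUg : ∀ N, ∫ t in U N, g t ∂μ = ∑ n ∈ Finset.range N, ∫ t in E n, g t ∂μ := by
      intro N
      exact integral_biUnion_finset (Finset.range N) (fun n _ => hEmeas n)
        (fun i _ j _ hij => hEdisj hij) (fun n _ => hgint.integrableOn)
    have hRg : ∀ N, ∫ t in R N, g t ∂μ
        = (∫ t in ⋃ n, E n, g t ∂μ) - ∑ n ∈ Finset.range N, ∫ t in E n, g t ∂μ := by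
      intro N
      have := setIntegral_union (hUR N) (hRmeas N) hgint.integrableOn hgint.integrableOn
        (f := g) (μ := μ)
      rw [← hsplit N] at this
      rw [this, hUg N]
      ring
    have htail : Tendsto (fun N => (∫ t in ⋃ n, E n, g t ∂μ)
        - ∑ n ∈ Finset.range N, ∫ t in E n, g t ∂μ) atTop (𝓝 0) := by
      have h1 := hsum.tendsto_sum_nat
      have := tendsto_const_nhds (x := ∫ t in ⋃ n, E n, g t ∂μ) (f := atTop (α := ℕ)) |>.sub h1
      simpa using this
    have hbound : ∀ N, p ((∑ n ∈ Finset.range N, m (E n)) - m (⋃ n, E n))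
        ≤ (∫ t in ⋃ n, E n, g t ∂μ) - ∑ n ∈ Finset.range N, ∫ t in E n, g t ∂μ := by
      intro N
      have hkey : m (⋃ n, E n) - ∑ n ∈ Finset.range N, m (E n)
          = (m (U N ∪ R N) - m (U N) - m (R N))
            + (m (U N) - ∑ n ∈ Finset.range N, m (E n)) + m (R N) := by
        rw [← hsplit N]
        abel
      rw [sem_sub_rev, hkey]
      calc p ((m (U N ∪ R N) - m (U N) - m (R N))
            + (m (U N) - ∑ n ∈ Finset.range N, m (E n)) + m (R N))
          ≤ p ((m (U N ∪ R N) - m (U N) - m (R N))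
              + (m (U N) - ∑ n ∈ Finset.range N, m (E n))) + p (m (R N)) := map_add_le_add _ _ _
        _ ≤ p (m (U N ∪ R N) - m (U N) - m (R N))
            + p (m (U N) - ∑ n ∈ Finset.range N, m (E n)) + p (m (R N)) := by
            gcongr
            exact map_add_le_add _ _ _
        _ = p (m (R N)) := by
            rw [hmadd P (U N) (R N) (hUmeas N) (hRmeas N) (hUR N), hUadd N]
            ring
        _ ≤ ∫ t in R N, g t ∂μ := hbd P (R N) (hRmeas N)
        _ = (∫ t in ⋃ n, E n, g t ∂μ) - ∑ n ∈ Finset.range N, ∫ t in E n, g t ∂μ := hRg N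
    exact squeeze_zero (fun N => apply_nonneg _ _) hbound htail
  -- m has bounded variation
  have hBV : HasBoundedVariation m := by
    intro p hp
    set P : ContSem X := ⟨p, hp⟩
    refine ⟨∫ t, p (F p t) ∂μ, fun π hπmeas hπdisj _ => ?_⟩
    calc ∑ A ∈ π, p (m A) ≤ ∑ A ∈ π, ∫ t in A, p (F p t) ∂μ :=
          Finset.sum_le_sum fun A hAπ => hbd P A (hπmeas A hAπ)
      _ = ∫ t in ⋃ A ∈ π, A, p (F p t) ∂μ :=
          (integral_biUnion_finset π (fun A hAπ => hπmeas A hAπ)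
            (fun A hAπ B hBπ hAB => hπdisj hAπ hBπ hAB) fun A _ => (hgP P).integrableOn).symm
      _ ≤ ∫ t, p (F p t) ∂μ :=
          setIntegral_le_integral (hgP P) (Filter.Eventually.of_forall fun t => apply_nonneg _ _)
  -- m vanishes on null sets
  have hnull : ∀ Z' : Set Ω, MeasurableSet Z' → μ Z' = 0 → m Z' = 0 := by
    intro Z' hZ'meas h0
    apply seminorms_separate
    intro p hp
    have := hbd ⟨p, hp⟩ Z' hZ'meas
    rw [Measure.restrict_zero_set h0, integral_zero_measure] at this
    exact le_antisymm this (apply_nonneg _ _)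
  -- apply the Radon-Nikodym property
  obtain ⟨f, G, hG1, hG2⟩ := hRNP m hVM hBV hnull
  refine ⟨f, fun p hp => ?_⟩
  set P : ContSem X := ⟨p, hp⟩
  obtain ⟨ZG, hGsimp, hZGmeas, hZG0, hGae, hGint, hGint0⟩ := hG1 p hp
  have hZ'0 : μ (ZG ∪ Z P) = 0 := measure_union_null hZG0 (hZ0 P)
  have hsimp' : ∀ n : ℕ, IsMeasSimple (fun ω => G p n ω - fn P n ω) :=
    fun n => (hGsimp n).sub (hsimp P n)
  have hkey : ∀ (n : ℕ) (t : Ω), (G p n t - fn P n t) - (f t - F p t)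
      = (G p n t - f t) - (fn P n t - F p t) := fun n t => sub_sub_sub_comm _ _ _ _
  have hkeyle : ∀ (n : ℕ) (t : Ω), p ((G p n t - fn P n t) - (f t - F p t))
      ≤ p (G p n t - f t) + p (fn P n t - F p t) := by
    intro n t
    rw [hkey n t]
    exact sem_sub_le _ _ _
  have hae' : ∀ t ∉ ZG ∪ Z P, Tendsto
      (fun n => p ((G p n t - fn P n t) - (f t - F p t))) atTop (𝓝 0) := by
    intro t ht
    rw [Set.mem_union] at ht
    push_neg at ht
    refine squeeze_zero (fun n => apply_nonneg _ _) (fun n => hkeyle n t) ?_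
    have := (hGae t ht.1).add (hae P t ht.2)
    simpa using this
  have hintd : ∀ n : ℕ, Integrable (fun t => p ((G p n t - fn P n t) - (f t - F p t))) μ := by
    intro n
    have hmeasd : AEStronglyMeasurable
        (fun t => p ((G p n t - fn P n t) - (f t - F p t))) μ := by
      have htend : ∀ᵐ t ∂μ, Tendsto
          (fun k => p ((G p n t - fn P n t) - (G p k t - fn P k t))) atTop
          (𝓝 (p ((G p n t - fn P n t) - (f t - F p t)))) := by
        have hZae : ∀ᵐ t ∂μ, t ∉ ZG ∪ Z P := by
          rw [ae_iff]
          refine measure_mono_null (fun a ha => ?_) hZ'0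
          simp only [Set.mem_setOf_eq, not_not] at ha
          exact ha
        filter_upwards [hZae] with t ht
        have hb : ∀ k, ‖p ((G p n t - fn P n t) - (G p k t - fn P k t))
            - p ((G p n t - fn P n t) - (f t - F p t))‖
            ≤ p ((G p k t - fn P k t) - (f t - F p t)) := by
          intro k
          have h1 := sem_abs_sub_le p ((G p n t - fn P n t) - (G p k t - fn P k t))
            ((G p n t - fn P n t) - (f t - F p t))
          have h2 : ((G p n t - fn P n t) - (G p k t - fn P k t))
              - ((G p n t - fn P n t) - (f t - F p t))
              = (f t - F p t) - (G p k t - fn P k t) := by abel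
          rw [h2] at h1
          rw [Real.norm_eq_abs]
          calc |_| ≤ p ((f t - F p t) - (G p k t - fn P k t)) := h1
            _ = p ((G p k t - fn P k t) - (f t - F p t)) := sem_sub_rev _ _ _
        have h0 := squeeze_zero_norm hb (hae' t ht)
        have := h0.add_const (p ((G p n t - fn P n t) - (f t - F p t)))
        simpa using this
      exact (aemeasurable_of_tendsto_metrizable_ae atTop
        (fun k => (((hGsimp n).sub (hsimp P n)).sub
          ((hGsimp k).sub (hsimp P k))).measurable_comp p |>.aemeasurable) htend
        ).aestronglyMeasurable
    refine Integrable.mono' ((hGint n).add (hint P n)) hmeasd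
      (Filter.Eventually.of_forall fun t => ?_)
    rw [Real.norm_of_nonneg (apply_nonneg _ _)]
    exact hkeyle n t
  have hintd0 : Tendsto
      (fun n => ∫ t, p ((G p n t - fn P n t) - (f t - F p t)) ∂μ) atTop (𝓝 0) := by
    refine squeeze_zero
      (g := fun n => (∫ t, p (G p n t - f t) ∂μ) + ∫ t, p (fn P n t - F p t) ∂μ)
      (fun n => integral_nonneg fun t => apply_nonneg _ _) (fun n => ?_) ?_
    · calc ∫ t, p ((G p n t - fn P n t) - (f t - F p t)) ∂μ
          ≤ ∫ t, (p (G p n t - f t) + p (fn P n t - F p t)) ∂μ :=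
            integral_mono (hintd n) ((hGint n).add (hint P n)) (hkeyle n)
        _ = (∫ t, p (G p n t - f t) ∂μ) + ∫ t, p (fn P n t - F p t) ∂μ :=
            integral_add (hGint n) (hint P n)
    · have := hGint0.add (hint0 P)
      simpa using this
  have hEd : ∀ E : Set Ω, MeasurableSet E →
      Tendsto (fun n => p (simpleIntegral μ (fun ω => G p n ω - fn P n ω) E)) atTop (𝓝 0) := by
    intro E hE
    have hsq : Tendsto (fun n => p (m E - simpleIntegral μ (G p n) E)
        + p (xi P E - simpleIntegral μ (fn P n) E)) atTop (𝓝 0) := by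
      have := (hG2 E hE p hp).add (hxi P E hE)
      simpa using this
    refine squeeze_zero (fun n => apply_nonneg _ _) (fun n => ?_) hsq
    rw [simpleIntegral_sub (hGsimp n) (hsimp P n) hE]
    have hkey2 : simpleIntegral μ (G p n) E - simpleIntegral μ (fn P n) E
        = (m E - simpleIntegral μ (fn P n) E) - (m E - simpleIntegral μ (G p n) E) := by abel
    rw [hkey2]
    calc p ((m E - simpleIntegral μ (fn P n) E) - (m E - simpleIntegral μ (G p n) E))
        ≤ p (m E - simpleIntegral μ (fn P n) E) + p (m E - simpleIntegral μ (G p n) E) :=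
          sem_sub_le _ _ _
      _ ≤ (p (m E - xi P E) + p (xi P E - simpleIntegral μ (fn P n) E))
          + p (m E - simpleIntegral μ (G p n) E) := by
          gcongr
          exact sem_triangle _ _ _ _
      _ = p (m E - simpleIntegral μ (G p n) E) + p (xi P E - simpleIntegral μ (fn P n) E) := by
          rw [hm E hE P]
          ring
  exact integral_seminorm_eq_zero p hsimp' hZ'0 hae' hintd hintd0 hEd
end
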